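/- Let T₀, T₁ and S be monads on the category Type u of sets and let φ : T₀ → T₁ be a monad morphism each of whose components φ_X : T₀ X → T₁ X is surjective. If the forgetful functor from TAlg(T₀,S) to Type u has a left adjoint (i.e., the tensor T₀ ⊗ S exists), then the forgetful functor from TAlg(T₁,S) to Type u has a left adjoint (i.e., the tensor T₁ ⊗ S exists). -/

import Mathlib

open CategoryTheory

universe u

/-- A `(T,S)`-tensor algebra: a set with Eilenberg–Moore algebra structures for both
monads, satisfying the tensor law. -/
structure TensorAlg (T S : Monad (Type u)) where
  carrier : Type u
  α : T.obj carrier → carrier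
  β : S.obj carrier → carrier
  α_unit : ∀ x : carrier, α (T.η.app carrier x) = x
  α_mul : ∀ m : T.obj (T.obj carrier), α (T.μ.app carrier m) = α (T.map (TypeCat.ofHom α) m)
  β_unit : ∀ x : carrier, β (S.η.app carrier x) = x
  β_mul : ∀ m : S.obj (S.obj carrier), β (S.μ.app carrier m) = β (S.map (TypeCat.ofHom β) m)
  tensor_law : ∀ {Y Z : Type u} (p : T.obj Y) (q : S.obj Z) (f : Y × Z → carrier),
    α (T.map (TypeCat.ofHom (fun y => β (S.map (TypeCat.ofHom (fun z => f (y, z))) q))) p) =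
      β (S.map (TypeCat.ofHom (fun z => α (T.map (TypeCat.ofHom (fun y => f (y, z))) p))) q)

/-- Morphisms of tensor algebras: maps homomorphic for both structures. -/
@[ext]
structure TensorAlgHom {T S : Monad (Type u)} (A B : TensorAlg T S) where
  toFun : A.carrier → B.carrier
  map_α : ∀ m : T.obj A.carrier, toFun (A.α m) = B.α (T.map (TypeCat.ofHom toFun) m)
  map_β : ∀ m : S.obj A.carrier, toFun (A.β m) = B.β (S.map (TypeCat.ofHom toFun) m)

instance TensorAlg.instCategory {T S : Monad (Type u)} : Category (TensorAlg T S) where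
  Hom A B := TensorAlgHom A B
  id A :=
    { toFun := id
      map_α := fun m => by
        show A.α m = A.α (T.map (TypeCat.ofHom id) m)
        rw [show TypeCat.ofHom (id : A.carrier → A.carrier) = 𝟙 A.carrier from rfl,
          CategoryTheory.Functor.map_id]
        rfl
      map_β := fun m => by
        show A.β m = A.β (S.map (TypeCat.ofHom id) m)
        rw [show TypeCat.ofHom (id : A.carrier → A.carrier) = 𝟙 A.carrier from rfl,
          CategoryTheory.Functor.map_id]
        rfl }
  comp {A B C} f g :=
    { toFun := g.toFun ∘ f.toFun
      map_α := fun m => by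
        show g.toFun (f.toFun (A.α m)) = C.α (T.map (TypeCat.ofHom (g.toFun ∘ f.toFun)) m)
        rw [f.map_α, g.map_α]
        congr 1
        rw [show TypeCat.ofHom (g.toFun ∘ f.toFun) =
          TypeCat.ofHom f.toFun ≫ TypeCat.ofHom g.toFun from rfl, CategoryTheory.Functor.map_comp]
        rfl
      map_β := fun m => by
        show g.toFun (f.toFun (A.β m)) = C.β (S.map (TypeCat.ofHom (g.toFun ∘ f.toFun)) m)
        rw [f.map_β, g.map_β]
        congr 1
        rw [show TypeCat.ofHom (g.toFun ∘ f.toFun) =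
          TypeCat.ofHom f.toFun ≫ TypeCat.ofHom g.toFun from rfl, CategoryTheory.Functor.map_comp]
        rfl }
  id_comp f := by apply TensorAlgHom.ext; rfl
  comp_id f := by apply TensorAlgHom.ext; rfl
  assoc f g h := by apply TensorAlgHom.ext; rfl

/-- The forgetful functor from `(T,S)`-tensor algebras to sets. -/
def forgetTAlg (T S : Monad (Type u)) : TensorAlg T S ⥤ Type u where
  obj A := A.carrier
  map f := TypeCat.ofHom (TensorAlgHom.toFun f)
  map_id _ := rfl
  map_comp _ _ := rfl


lemma map_surj (F : Type u ⥤ Type u) {X Y : Type u} {f : X → Y}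
    (hf : Function.Surjective f) : Function.Surjective (F.map (TypeCat.ofHom f)) := by
  intro m
  refine ⟨F.map (TypeCat.ofHom (Function.surjInv hf)) m, ?_⟩
  rw [← FunctorToTypes.map_comp_apply]
  have : (TypeCat.ofHom (Function.surjInv hf) ≫ TypeCat.ofHom f) = 𝟙 Y := by
    ext y; exact Function.surjInv_eq hf y
  rw [this, FunctorToTypes.map_id_apply]

lemma mapc (F : Type u ⥤ Type u) {X Y Z : Type u} (f : X → Y) (g : Y → Z) (x : F.obj X) :
    F.map (TypeCat.ofHom (fun a => g (f a))) x =
      F.map (TypeCat.ofHom g) (F.map (TypeCat.ofHom f) x) :=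
  FunctorToTypes.map_comp_apply F (TypeCat.ofHom f) (TypeCat.ofHom g) x

lemma mapcH (F : Type u ⥤ Type u) {X Y Z : Type u} (f : X ⟶ Y) (g : Y ⟶ Z) (x : F.obj X) :
    F.map (TypeCat.ofHom (fun a => g (f a))) x = F.map g (F.map f x) :=
  FunctorToTypes.map_comp_apply F f g x

lemma eta_nat (T : Monad (Type u)) {X Y : Type u} (f : X → Y) (x : X) :
    T.η.app Y (f x) = T.map (TypeCat.ofHom f) (T.η.app X x) :=
  ConcreteCategory.congr_hom (T.η.naturality (TypeCat.ofHom f)) x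

lemma mu_nat (T : Monad (Type u)) {X Y : Type u} (f : X → Y) (m : T.obj (T.obj X)) :
    T.μ.app Y (T.map (T.map (TypeCat.ofHom f)) m) = T.map (TypeCat.ofHom f) (T.μ.app X m) :=
  ConcreteCategory.congr_hom (T.μ.naturality (TypeCat.ofHom f)) m

section
variable {T₀ T₁ : Monad (Type u)} (φ : T₀ ⟶ T₁)

lemma phi_nat {X Y : Type u} (f : X → Y) (m : T₀.obj X) :
    φ.app Y (T₀.map (TypeCat.ofHom f) m) = T₁.map (TypeCat.ofHom f) (φ.app X m) :=
  ConcreteCategory.congr_hom (φ.toNatTrans.naturality (TypeCat.ofHom f)) m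

lemma phi_eta {X : Type u} (x : X) : φ.app X (T₀.η.app X x) = T₁.η.app X x :=
  ConcreteCategory.congr_hom (φ.app_η X) x

lemma phi_mu {X : Type u} (m : T₀.obj (T₀.obj X)) :
    φ.app X (T₀.μ.app X m) = T₁.μ.app X (φ.app (T₁.obj X) (T₀.map (φ.app X) m)) :=
  ConcreteCategory.congr_hom (φ.app_μ X) m
end
section Constructions
variable {T₀ T₁ S : Monad (Type u)} (φ : T₀ ⟶ T₁)

/-- Restrict a `(T₁,S)`-tensor algebra to a `(T₀,S)`-tensor algebra along `φ`. -/
@[reducible]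
def resAlg (B : TensorAlg T₁ S) : TensorAlg T₀ S where
  carrier := B.carrier
  α m := B.α (φ.app _ m)
  β := B.β
  α_unit x := by beta_reduce; rw [phi_eta, B.α_unit]
  α_mul m := by
    beta_reduce
    rw [phi_mu, B.α_mul]
    congr 1
    rw [← phi_nat φ B.α, ← FunctorToTypes.map_comp_apply]
    rfl
  β_unit := B.β_unit
  β_mul := B.β_mul
  tensor_law {Y Z} p q f := by
    beta_reduce
    rw [phi_nat φ _ p, B.tensor_law (φ.app Y p) q f]
    simp only [phi_nat]

/-- Restriction of morphisms. -/
def resHom {B C : TensorAlg T₁ S} (g : B ⟶ C) : resAlg φ B ⟶ resAlg φ C where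
  toFun := g.toFun
  map_α m := by
    show g.toFun (B.α (φ.app _ m)) = C.α (φ.app _ (T₀.map (TypeCat.ofHom g.toFun) m))
    rw [phi_nat, g.map_α]
  map_β := g.map_β

/-- Products of `(T₁,S)`-tensor algebras. -/
def prodAlg {I : Type u} (B : I → TensorAlg T₁ S) : TensorAlg T₁ S where
  carrier := ∀ i, (B i).carrier
  α m i := (B i).α (T₁.map (TypeCat.ofHom fun v : (∀ j, (B j).carrier) => v i) m)
  β m i := (B i).β (S.map (TypeCat.ofHom fun v : (∀ j, (B j).carrier) => v i) m)
  α_unit x := by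
    funext i; beta_reduce
    rw [← eta_nat, (B i).α_unit]
  α_mul m := by
    funext i; beta_reduce
    rw [← mu_nat, (B i).α_mul]
    simp only [← mapc, ← mapcH, TypeCat.ofHom_apply]
  β_unit x := by
    funext i; beta_reduce
    rw [← eta_nat, (B i).β_unit]
  β_mul m := by
    funext i; beta_reduce
    rw [← mu_nat, (B i).β_mul]
    simp only [← mapc, ← mapcH, TypeCat.ofHom_apply]
  tensor_law {Y Z} p q f := by
    funext i; beta_reduce
    simp only [← mapc, ← mapcH, TypeCat.ofHom_apply]
    exact (B i).tensor_law p q (fun yz => f yz i)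

/-- Projection homomorphisms out of a product. -/
def projHom {I : Type u} (B : I → TensorAlg T₁ S) (i : I) : prodAlg B ⟶ B i where
  toFun := fun (v : ∀ j, (B j).carrier) => v i
  map_α _ := rfl
  map_β _ := rfl

end Constructions
section Image
variable {T₀ T₁ S : Monad (Type u)} (φ : T₀ ⟶ T₁)
variable {A : TensorAlg T₀ S} {B : TensorAlg T₁ S} (f : A ⟶ resAlg φ B)

/-- The image of a `T₀`-homomorphism into a restricted `T₁`-algebra is closed under the
`T₁`-structure (using surjectivity of `φ`). -/
lemma image_alpha_mem (hφ : ∀ X : Type u, Function.Surjective (φ.app X)) (m : T₁.obj (Set.range f.toFun)) :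
    B.α (T₁.map (TypeCat.ofHom Subtype.val) m) ∈ Set.range f.toFun := by
  obtain ⟨m₁, rfl⟩ := map_surj T₁.toFunctor
    (Set.rangeFactorization_surjective (f := f.toFun)) m
  obtain ⟨m₀, rfl⟩ := hφ _ m₁
  refine ⟨A.α m₀, ?_⟩
  rw [f.map_α]
  show B.α (φ.app _ (T₀.map (TypeCat.ofHom f.toFun) m₀)) = _
  rw [phi_nat, ← mapc]
  rfl

lemma image_beta_mem (m : S.obj (Set.range f.toFun)) :
    B.β (S.map (TypeCat.ofHom Subtype.val) m) ∈ Set.range f.toFun := by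
  obtain ⟨m₀, rfl⟩ := map_surj S.toFunctor
    (Set.rangeFactorization_surjective (f := f.toFun)) m
  refine ⟨A.β m₀, ?_⟩
  rw [f.map_β]
  show B.β (S.map (TypeCat.ofHom f.toFun) m₀) = _
  rw [← mapc]
  rfl

/-- The image of a `T₀`-homomorphism into a restricted `T₁`-algebra, as a
`(T₁,S)`-tensor algebra. -/
@[reducible]
def imageAlg (hφ : ∀ X : Type u, Function.Surjective (φ.app X)) : TensorAlg T₁ S where
  carrier := Set.range f.toFun
  α m := ⟨B.α (T₁.map (TypeCat.ofHom Subtype.val) m), image_alpha_mem φ f hφ m⟩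
  β m := ⟨B.β (S.map (TypeCat.ofHom Subtype.val) m), image_beta_mem φ f m⟩
  α_unit x := by
    apply Subtype.ext
    show B.α (T₁.map (TypeCat.ofHom Subtype.val) (T₁.η.app _ x)) = _
    rw [← eta_nat, B.α_unit]
  α_mul m := by
    apply Subtype.ext
    show B.α (T₁.map (TypeCat.ofHom Subtype.val) (T₁.μ.app _ m)) = B.α (T₁.map (TypeCat.ofHom Subtype.val) (T₁.map _ m))
    rw [← mu_nat, B.α_mul]
    simp only [← mapc, ← mapcH, TypeCat.ofHom_apply]
  β_unit x := by
    apply Subtype.ext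
    show B.β (S.map (TypeCat.ofHom Subtype.val) (S.η.app _ x)) = _
    rw [← eta_nat, B.β_unit]
  β_mul m := by
    apply Subtype.ext
    show B.β (S.map (TypeCat.ofHom Subtype.val) (S.μ.app _ m)) = B.β (S.map (TypeCat.ofHom Subtype.val) (S.map _ m))
    rw [← mu_nat, B.β_mul]
    simp only [← mapc, ← mapcH, TypeCat.ofHom_apply]
  tensor_law {Y Z} p q g := by
    apply Subtype.ext
    show B.α (T₁.map (TypeCat.ofHom Subtype.val) (T₁.map _ p)) = B.β (S.map (TypeCat.ofHom Subtype.val) (S.map _ q))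
    simp only [← mapc, ← mapcH, TypeCat.ofHom_apply]
    exact B.tensor_law p q (fun yz => (g yz).val)

/-- The corestriction onto the image, as a `T₀`-homomorphism. -/
def imageCorestrict (hφ : ∀ X : Type u, Function.Surjective (φ.app X)) : A ⟶ resAlg φ (imageAlg φ f hφ) where
  toFun := Set.rangeFactorization f.toFun
  map_α m := by
    apply Subtype.ext
    show f.toFun (A.α m) = B.α (T₁.map (TypeCat.ofHom Subtype.val) (φ.app _ (T₀.map (TypeCat.ofHom _) m)))
    rw [f.map_α]
    show B.α (φ.app _ (T₀.map (TypeCat.ofHom f.toFun) m)) = _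
    rw [phi_nat, phi_nat]
    congr 1
    rw [← mapc]
    rfl
  map_β m := by
    apply Subtype.ext
    show f.toFun (A.β m) = B.β (S.map (TypeCat.ofHom Subtype.val) (S.map (TypeCat.ofHom _) m))
    rw [f.map_β]
    show B.β (S.map (TypeCat.ofHom f.toFun) m) = _
    rw [← mapc]
    rfl

/-- The inclusion of the image, as a `T₁`-homomorphism. -/
def imageIncl (hφ : ∀ X : Type u, Function.Surjective (φ.app X)) : imageAlg φ f hφ ⟶ B where
  toFun := Subtype.val
  map_α _ := rfl
  map_β _ := rfl

lemma imageCorestrict_surjective (hφ : ∀ X : Type u, Function.Surjective (φ.app X)) :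
    Function.Surjective (imageCorestrict φ f hφ).toFun :=
  Set.rangeFactorization_surjective

end Image
section Transport
variable {T₁ S : Monad (Type u)}

/-- Transport a `(T₁,S)`-tensor algebra structure along an equivalence of types. -/
def transportAlg (B : TensorAlg T₁ S) {C : Type u} (e : C ≃ B.carrier) : TensorAlg T₁ S where
  carrier := C
  α m := e.symm (B.α (T₁.map (TypeCat.ofHom ⇑e) m))
  β m := e.symm (B.β (S.map (TypeCat.ofHom ⇑e) m))
  α_unit x := by
    beta_reduce
    rw [← eta_nat, B.α_unit, e.symm_apply_apply]
  α_mul m := by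
    beta_reduce
    rw [← mu_nat, B.α_mul]
    apply congrArg
    apply congrArg
    simp only [← mapc, ← mapcH, TypeCat.ofHom_apply]
    simp only [e.apply_symm_apply]
  β_unit x := by
    beta_reduce
    rw [← eta_nat, B.β_unit, e.symm_apply_apply]
  β_mul m := by
    beta_reduce
    rw [← mu_nat, B.β_mul]
    apply congrArg
    apply congrArg
    simp only [← mapc, ← mapcH, TypeCat.ofHom_apply]
    simp only [e.apply_symm_apply]
  tensor_law {Y Z} p q f := by
    beta_reduce
    apply congrArg
    simp only [← mapc, ← mapcH, TypeCat.ofHom_apply]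
    simp only [e.apply_symm_apply]
    exact B.tensor_law p q (fun yz => e (f yz))

/-- The transported structure maps to the original via `e`, as a homomorphism. -/
def transportHom (B : TensorAlg T₁ S) {C : Type u} (e : C ≃ B.carrier) :
    transportAlg B e ⟶ B where
  toFun := e
  map_α _ := e.apply_symm_apply _
  map_β _ := e.apply_symm_apply _

end Transport
section QData
variable {T₀ T₁ S : Monad (Type u)} (φ : T₀ ⟶ T₁)

/-- A `(T₁,S)`-tensor algebra structure on a quotient of the carrier of a
`(T₀,S)`-tensor algebra `A`, such that the quotient map is a homomorphism.
This is a small type, suitable as an index for products. -/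
structure QData (A : TensorAlg T₀ S) : Type u where
  r : Setoid A.carrier
  qα : T₁.obj (Quotient r) → Quotient r
  qβ : S.obj (Quotient r) → Quotient r
  qα_unit : ∀ x, qα (T₁.η.app _ x) = x
  qα_mul : ∀ m, qα (T₁.μ.app _ m) = qα (T₁.map (TypeCat.ofHom qα) m)
  qβ_unit : ∀ x, qβ (S.η.app _ x) = x
  qβ_mul : ∀ m, qβ (S.μ.app _ m) = qβ (S.map (TypeCat.ofHom qβ) m)
  qtensor : ∀ {Y Z : Type u} (p : T₁.obj Y) (q : S.obj Z) (f : Y × Z → Quotient r),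
    qα (T₁.map (TypeCat.ofHom (fun y => qβ (S.map (TypeCat.ofHom (fun z => f (y, z))) q))) p) =
      qβ (S.map (TypeCat.ofHom (fun z => qα (T₁.map (TypeCat.ofHom (fun y => f (y, z))) p))) q)
  mk_α : ∀ m : T₀.obj A.carrier,
    Quotient.mk r (A.α m) = qα (φ.app _ (T₀.map (TypeCat.ofHom (Quotient.mk r)) m))
  mk_β : ∀ m : S.obj A.carrier,
    Quotient.mk r (A.β m) = qβ (S.map (TypeCat.ofHom (Quotient.mk r)) m)

variable {A : TensorAlg T₀ S}

/-- The tensor algebra on the quotient determined by a `QData`. -/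
def QData.alg (q : QData φ A) : TensorAlg T₁ S where
  carrier := Quotient q.r
  α := q.qα
  β := q.qβ
  α_unit := q.qα_unit
  α_mul := q.qα_mul
  β_unit := q.qβ_unit
  β_mul := q.qβ_mul
  tensor_law := q.qtensor

/-- The quotient map as a `T₀`-homomorphism. -/
def QData.mkHom (q : QData φ A) : A ⟶ resAlg φ q.alg where
  toFun := Quotient.mk q.r
  map_α := q.mk_α
  map_β := q.mk_β

variable {B : TensorAlg T₁ S} (f : A ⟶ resAlg φ B)
  (hφ : ∀ X : Type u, Function.Surjective (φ.app X))

/-- The `QData` arising from an arbitrary homomorphism `f : A ⟶ resAlg φ B`: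
quotient by the kernel of `f`, with structure transported from the image of `f`. -/
noncomputable def qOf : QData φ A where
  r := Setoid.ker f.toFun
  qα := (transportAlg (imageAlg φ f hφ) (Setoid.quotientKerEquivRange f.toFun)).α
  qβ := (transportAlg (imageAlg φ f hφ) (Setoid.quotientKerEquivRange f.toFun)).β
  qα_unit := (transportAlg (imageAlg φ f hφ) (Setoid.quotientKerEquivRange f.toFun)).α_unit
  qα_mul := (transportAlg (imageAlg φ f hφ) (Setoid.quotientKerEquivRange f.toFun)).α_mul
  qβ_unit := (transportAlg (imageAlg φ f hφ) (Setoid.quotientKerEquivRange f.toFun)).β_unit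
  qβ_mul := (transportAlg (imageAlg φ f hφ) (Setoid.quotientKerEquivRange f.toFun)).β_mul
  qtensor := (transportAlg (imageAlg φ f hφ) (Setoid.quotientKerEquivRange f.toFun)).tensor_law
  mk_α m := by
    set e := Setoid.quotientKerEquivRange f.toFun with he
    apply e.injective
    show e (Quotient.mk _ (A.α m)) =
      e (e.symm ((imageAlg φ f hφ).α (T₁.map (TypeCat.ofHom ⇑e) (φ.app _ (T₀.map (TypeCat.ofHom (Quotient.mk _)) m)))))
    rw [e.apply_symm_apply, ← phi_nat, ← mapc]
    have hcomp : (fun a => e (Quotient.mk (Setoid.ker f.toFun) a)) =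
        Set.rangeFactorization f.toFun := rfl
    rw [hcomp]
    exact (imageCorestrict φ f hφ).map_α m
  mk_β m := by
    set e := Setoid.quotientKerEquivRange f.toFun with he
    apply e.injective
    show e (Quotient.mk _ (A.β m)) =
      e (e.symm ((imageAlg φ f hφ).β (S.map (TypeCat.ofHom ⇑e) (S.map (TypeCat.ofHom (Quotient.mk _)) m))))
    rw [e.apply_symm_apply, ← mapc]
    have hcomp : (fun a => e (Quotient.mk (Setoid.ker f.toFun) a)) =
        Set.rangeFactorization f.toFun := rfl
    rw [hcomp]
    exact (imageCorestrict φ f hφ).map_β m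

lemma qOf_alg : (qOf φ f hφ).alg φ =
    transportAlg (imageAlg φ f hφ) (Setoid.quotientKerEquivRange f.toFun) := rfl

end QData
section Main
variable {T₀ T₁ S : Monad (Type u)} (φ : T₀ ⟶ T₁)
  (hφ : ∀ X : Type u, Function.Surjective (φ.app X))
  {F₀ : Type u ⥤ TensorAlg T₀ S}

/-- The canonical map from the free `(T₀,S)`-algebra into the product of all its
structured quotients. -/
def eHom (A : TensorAlg T₀ S) :
    A ⟶ resAlg φ (prodAlg (fun q : QData φ A => q.alg φ)) where
  toFun a q := Quotient.mk q.r a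
  map_α m := by
    funext q
    show Quotient.mk q.r (A.α m) =
      (q.alg φ).α (T₁.map (TypeCat.ofHom fun v : ∀ q' : QData φ A, Quotient q'.r => v q)
        (φ.app _ (T₀.map (TypeCat.ofHom fun (a : A.carrier) (q' : QData φ A) => Quotient.mk q'.r a) m)))
    rw [← phi_nat, ← mapc]
    exact q.mk_α m
  map_β m := by
    funext q
    show Quotient.mk q.r (A.β m) =
      (q.alg φ).β (S.map (TypeCat.ofHom fun v : ∀ q' : QData φ A, Quotient q'.r => v q)
        (S.map (TypeCat.ofHom fun (a : A.carrier) (q' : QData φ A) => Quotient.mk q'.r a) m))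
    rw [← mapc]
    exact q.mk_β m

/-- The candidate free `(T₁,S)`-tensor algebra on `X`. -/
noncomputable def FObj (X : Type u) : TensorAlg T₁ S :=
  imageAlg φ (eHom φ (F₀.obj X)) hφ

/-- The corestriction of `eHom` onto the candidate free algebra. -/
noncomputable def piHom (X : Type u) : F₀.obj X ⟶ resAlg φ (FObj φ hφ (F₀ := F₀) X) :=
  imageCorestrict φ (eHom φ (F₀.obj X)) hφ

/-- Factorization of an arbitrary homomorphism through the candidate free algebra. -/
noncomputable def factor {X : Type u} {B : TensorAlg T₁ S}
    (f : F₀.obj X ⟶ resAlg φ B) : FObj φ hφ (F₀ := F₀) X ⟶ B :=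
  imageIncl φ (eHom φ (F₀.obj X)) hφ ≫ projHom _ (qOf φ f hφ) ≫
    transportHom (imageAlg φ f hφ) (Setoid.quotientKerEquivRange f.toFun) ≫
      imageIncl φ f hφ

lemma factor_spec {X : Type u} {B : TensorAlg T₁ S}
    (f : F₀.obj X ⟶ resAlg φ B) (a : (F₀.obj X).carrier) :
    (factor φ hφ f).toFun ((piHom φ hφ (F₀ := F₀) X).toFun a) = f.toFun a := rfl

variable (adj₀ : F₀ ⊣ forgetTAlg T₀ S)

/-- The hom-equivalence exhibiting `FObj` as the free `(T₁,S)`-tensor algebra. -/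
noncomputable def equ (X : Type u) (B : TensorAlg T₁ S) :
    (FObj φ hφ (F₀ := F₀) X ⟶ B) ≃ (X ⟶ (forgetTAlg T₁ S).obj B) where
  toFun g := (adj₀.homEquiv X (resAlg φ B)) (piHom φ hφ X ≫ resHom φ g)
  invFun u := factor φ hφ ((adj₀.homEquiv X (resAlg φ B)).symm u)
  left_inv g := by
    have hf : (adj₀.homEquiv X (resAlg φ B)).symm
        ((adj₀.homEquiv X (resAlg φ B)) (piHom φ hφ X ≫ resHom φ g)) =
        piHom φ hφ X ≫ resHom φ g := Equiv.symm_apply_apply _ _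
    apply TensorAlgHom.ext
    funext x
    obtain ⟨a, rfl⟩ := imageCorestrict_surjective φ (eHom φ (F₀.obj X)) hφ x
    have h1 := factor_spec φ hφ ((adj₀.homEquiv X (resAlg φ B)).symm
        ((adj₀.homEquiv X (resAlg φ B)) (piHom φ hφ X ≫ resHom φ g))) a
    exact h1.trans (congrFun (congrArg TensorAlgHom.toFun hf) a)
  right_inv u := by
    have : piHom φ hφ X ≫ resHom φ (factor φ hφ ((adj₀.homEquiv X (resAlg φ B)).symm u)) =
        (adj₀.homEquiv X (resAlg φ B)).symm u := by
      apply TensorAlgHom.ext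
      funext a
      exact factor_spec φ hφ ((adj₀.homEquiv X (resAlg φ B)).symm u) a
    show (adj₀.homEquiv X (resAlg φ B)) (piHom φ hφ X ≫ resHom φ _) = u
    rw [this]
    exact Equiv.apply_symm_apply _ _

lemma equ_nat (X : Type u) (B B' : TensorAlg T₁ S) (g : B ⟶ B')
    (h : FObj φ hφ (F₀ := F₀) X ⟶ B) :
    equ φ hφ adj₀ X B' (h ≫ g) = equ φ hφ adj₀ X B h ≫ (forgetTAlg T₁ S).map g := by
  show (adj₀.homEquiv X (resAlg φ B')) (piHom φ hφ X ≫ resHom φ (h ≫ g)) = _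
  have hres : resHom φ (h ≫ g) = resHom φ h ≫ resHom φ g := by
    apply TensorAlgHom.ext; rfl
  rw [hres, ← Category.assoc, Adjunction.homEquiv_naturality_right]
  rfl

end Main
/-- Proposition 3.7(1): if `T₀ ⊗ S` exists and `φ : T₀ → T₁` is a componentwise
surjective monad morphism, then `T₁ ⊗ S` exists. -/
theorem tensor_exists_of_surjective_monadHom (T₀ T₁ S : Monad (Type u)) (φ : T₀ ⟶ T₁)
    (hsurj : ∀ X : Type u, Function.Surjective (φ.app X))
    (h : ∃ F : Type u ⥤ TensorAlg T₀ S, Nonempty (F ⊣ forgetTAlg T₀ S)) :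
    ∃ F : Type u ⥤ TensorAlg T₁ S, Nonempty (F ⊣ forgetTAlg T₁ S) := by
  obtain ⟨F₀, ⟨adj₀⟩⟩ := h
  exact ⟨Adjunction.leftAdjointOfEquiv (equ φ hsurj adj₀) (equ_nat φ hsurj adj₀),
    ⟨Adjunction.adjunctionOfEquivLeft (equ φ hsurj adj₀) (equ_nat φ hsurj adj₀)⟩⟩
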